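/- Let R and R' be commutative rings, D : R → R a derivation (an additive map with D(xy) = x·D(y) + y·D(x)), ε : R → R' a ring homomorphism, and r₁, …, r_N ∈ R with ε(rᵢ) = 0 for all i. Then ε(D^N(r₁ ⋯ r_N)) = N! · ∏_{i=1}^{N} ε(D(rᵢ)). -/

import Mathlib

open Finset

section Aux

variable {R : Type*} [CommRing R] (D : R → R)

private lemma D_sum (hD_add : ∀ x y, D (x + y) = D x + D y) {ι : Type*} (s : Finset ι) (f : ι → R) :
    D (∑ i ∈ s, f i) = ∑ i ∈ s, D (f i) :=
  map_sum (AddMonoidHom.mk' D hD_add) f s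

private lemma D_smul (hD_add : ∀ x y, D (x + y) = D x + D y) (n : ℕ) (x : R) : D (n • x) = n • D x :=
  AddMonoidHom.map_nsmul (AddMonoidHom.mk' D hD_add) n x

private lemma iterate_D_mul (hD_add : ∀ x y, D (x + y) = D x + D y) (hD_mul : ∀ x y, D (x * y) = x * D y + y * D x) (n : ℕ) (p q : R) :
    D^[n] (p * q) = ∑ k ∈ range n.succ, (n.choose k • (D^[n - k] p * D^[k] q)) := by
  induction n with
  | zero => simp [Finset.range]
  | succ n IH =>
    calc
      D^[n + 1] (p * q) =
          D (∑ k ∈ range n.succ, n.choose k • (D^[n - k] p * D^[k] q)) := by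
        rw [Function.iterate_succ_apply', IH]
      _ = (∑ k ∈ range n.succ,
            n.choose k • (D^[n - k + 1] p * D^[k] q)) +
          ∑ k ∈ range n.succ,
            n.choose k • (D^[n - k] p * D^[k + 1] q) := by
        rw [D_sum D hD_add]
        simp_rw [D_smul D hD_add, hD_mul, Function.iterate_succ_apply', smul_add,
          sum_add_distrib]
        rw [add_comm]
        congr 1 <;> exact sum_congr rfl fun k _ => by ring_nf
      _ = (∑ k ∈ range n.succ,
                n.choose k.succ • (D^[n - k] p * D^[k + 1] q)) +
              1 • (D^[n + 1] p * D^[0] q) +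
            ∑ k ∈ range n.succ, n.choose k • (D^[n - k] p * D^[k + 1] q) :=
        ?_
      _ = ((∑ k ∈ range n.succ, n.choose k • (D^[n - k] p * D^[k + 1] q)) +
              ∑ k ∈ range n.succ,
                n.choose k.succ • (D^[n - k] p * D^[k + 1] q)) +
            1 • (D^[n + 1] p * D^[0] q) := by
        rw [add_comm, add_assoc]
      _ = (∑ i ∈ range n.succ,
              (n + 1).choose (i + 1) • (D^[n + 1 - (i + 1)] p * D^[i + 1] q)) +
            1 • (D^[n + 1] p * D^[0] q) := by
        simp_rw [Nat.choose_succ_succ, Nat.succ_sub_succ, add_smul, sum_add_distrib]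
      _ = ∑ k ∈ range n.succ.succ,
            n.succ.choose k • (D^[n.succ - k] p * D^[k] q) := by
        rw [sum_range_succ' _ n.succ, Nat.choose_zero_right, tsub_zero]
    congr
    refine (sum_range_succ' _ _).trans (congr_arg₂ (· + ·) ?_ ?_)
    · rw [sum_range_succ, Nat.choose_succ_self, zero_smul, add_zero]
      refine sum_congr rfl fun k hk => ?_
      rw [mem_range] at hk
      congr
      omega
    · rw [Nat.choose_zero_right, tsub_zero]

variable {R' : Type*} [CommRing R'] (ε : R →+* R')

/-- Main induction: both the vanishing for `m < N` and the value at `m = N`. -/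
private lemma key (hD_add : ∀ x y, D (x + y) = D x + D y) (hD_mul : ∀ x y, D (x * y) = x * D y + y * D x) (N : ℕ) :
    ∀ (r : Fin N → R), (∀ i, ε (r i) = 0) →
      (∀ m < N, ε (D^[m] (∏ i, r i)) = 0) ∧
        ε (D^[N] (∏ i, r i)) = (Nat.factorial N : R') * ∏ i, ε (D (r i)) := by
  induction N with
  | zero =>
    intro r _
    refine ⟨fun m hm => absurd hm (Nat.not_lt_zero m), ?_⟩
    simp
  | succ N IH =>
    intro r hr
    have hprod : (∏ i, r i) = r 0 * ∏ i : Fin N, r i.succ := by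
      rw [Fin.prod_univ_succ]
    obtain ⟨IHA, IHB⟩ := IH (fun i => r i.succ) (fun i => hr i.succ)
    have hleib : ∀ m, ε (D^[m] (∏ i, r i)) =
        ∑ k ∈ range m.succ,
          (m.choose k : R') * (ε (D^[m - k] (r 0)) * ε (D^[k] (∏ i : Fin N, r i.succ))) := by
      intro m
      rw [hprod, iterate_D_mul D hD_add hD_mul, map_sum]
      exact sum_congr rfl fun k _ => by
        rw [nsmul_eq_mul, map_mul, map_mul, map_natCast]
    constructor
    · intro m hm
      rw [hleib m]
      refine sum_eq_zero fun k hk => ?_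
      rw [mem_range] at hk
      rcases Nat.lt_or_ge k N with hkN | hkN
      · rw [IHA k hkN]; ring
      · -- k ≤ m < N + 1 and k ≥ N force k = N = m, so m - k = 0
        have hk' : k = m := by omega
        have hmk : m - k = 0 := by omega
        rw [hmk]
        simp only [Function.iterate_zero, id_eq, hr 0]
        ring
    · rw [hleib (N + 1)]
      rw [Finset.sum_eq_single N]
      · have h1 : N + 1 - N = 1 := by omega
        have h2 : (N + 1).choose N = N + 1 := by
          simp [Nat.choose_symm (Nat.le_succ N)]
        rw [h1, h2, IHB, Fin.prod_univ_succ, Nat.factorial_succ, Function.iterate_one]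
        push_cast
        ring
      · intro k hk hkN
        rw [mem_range] at hk
        rcases Nat.lt_or_ge k N with hkN' | hkN'
        · rw [IHA k hkN']; ring
        · have : k = N + 1 := by omega
          subst this
          simp only [Nat.sub_self, Function.iterate_zero, id_eq, hr 0]
          ring
      · intro h
        exact absurd (mem_range.mpr (by omega)) h

end Aux

/-- If `D` is a derivation on a commutative ring `R`, `ε : R → R'` a ring homomorphism,
and `r₁, …, r_N ∈ ker ε`, then `ε(D^N(r₁ ⋯ r_N)) = N! · ∏ᵢ ε(D(rᵢ))`. -/
theorem derivation_pow_prod_top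
    {R R' : Type*} [CommRing R] [CommRing R']
    (D : R → R) (hD_add : ∀ x y, D (x + y) = D x + D y)
    (hD_mul : ∀ x y, D (x * y) = x * D y + y * D x)
    (ε : R →+* R') {N : ℕ} (r : Fin N → R) (hr : ∀ i, ε (r i) = 0) :
    ε (D^[N] (∏ i, r i)) = (Nat.factorial N : R') * ∏ i, ε (D (r i)) :=
  (key D ε hD_add hD_mul N r hr).2
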